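/- Let p be a prime, e ≥ 1, m ≥ 1, n = p^e, ℓ = (n^(m+1) − 1)/(n − 1), and f = e·(m+1). Let k ≥ 1, let j be a natural number, and let d : Fin k → ZMod ℓ. Define the cyclic sequence c of length f·k by c(h·k + i) = p^(h·j) · d(i) for h ∈ Fin f and i ∈ Fin k (indices taken cyclically modulo f·k). Then every difference of cyclically consecutive terms of c is a unit in ZMod ℓ if and only if (i) for every i with i + 1 < k, the difference d(i) − d(i+1) is a unit in ZMod ℓ, and (ii) d(k−1) − p^j · d(0) is a unit in ZMod ℓ. -/

import Mathlib

private lemma aux_block {R : Type*} [CommRing R] (q : R) (h j : ℕ) (a b : R) :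
    q ^ (h * j) * a - q ^ ((h + 1) * j) * b = q ^ (h * j) * (a - q ^ j * b) := by
  rw [show (h + 1) * j = h * j + j by ring, pow_add]; ring

private lemma aux_wrap {R : Type*} [CommRing R] (q : R) (h j f : ℕ) (hq : q ^ f = 1)
    (hhe : h + 1 = f) (a b : R) :
    q ^ (h * j) * a - b = q ^ (h * j) * (a - q ^ j * b) := by
  have : q ^ (h * j) * (q ^ j * b) = b := by
    rw [← mul_assoc, ← pow_add, show h * j + j = f * j by rw [← hhe]; ring,
      pow_mul, hq, one_pow, one_mul]
  rw [mul_sub, this]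

/-- Wada compatibility of a Frobenius compatible cyclic ordering: the cyclic sequence
`c(h·k + i) = p^(h·j) · d(i)` (of length `f·k`) has all cyclically consecutive differences
units in `ZMod ℓ` iff the differences of consecutive elements of the first block
`d(0), …, d(k-1)` and the transition difference `d(k-1) - p^j · d(0)` are units. -/
theorem stmt_11 (p e m n ℓ f : ℕ) (hp : p.Prime) (he : 1 ≤ e) (hm : 1 ≤ m)
    (hn : n = p ^ e) (hℓ : ℓ = (n ^ (m + 1) - 1) / (n - 1)) (hf : f = e * (m + 1))
    (k : ℕ) (hk : 1 ≤ k) (j : ℕ) (d : Fin k → ZMod ℓ)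
    (c : Fin (f * k) → ZMod ℓ)
    (hc : ∀ t : Fin (f * k),
      c t = (p : ZMod ℓ) ^ ((t.1 / k) * j) * d ⟨t.1 % k, Nat.mod_lt _ hk⟩) :
    (∀ t : Fin (f * k), IsUnit (c t - c ⟨(t.1 + 1) % (f * k), Nat.mod_lt _ t.pos⟩)) ↔
      ((∀ (i : Fin k) (h : i.1 + 1 < k), IsUnit (d i - d ⟨i.1 + 1, h⟩)) ∧
        IsUnit (d ⟨k - 1, by omega⟩ - (p : ZMod ℓ) ^ j * d ⟨0, hk⟩)) := by
  have hn2 : 2 ≤ n := by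
    rw [hn]
    calc 2 ≤ p := hp.two_le
    _ ≤ p ^ e := Nat.le_self_pow (by omega) p
  have hf2 : 2 ≤ f := by
    rw [hf]
    calc 2 = 1 * 2 := by ring
    _ ≤ e * (m + 1) := Nat.mul_le_mul he (by omega)
  have hdvd : (n - 1) ∣ n ^ (m + 1) - 1 := by
    simpa using Nat.sub_dvd_pow_sub_pow n 1 (m + 1)
  have hℓmul : ℓ * (n - 1) = n ^ (m + 1) - 1 := by
    rw [hℓ]; exact Nat.div_mul_cancel hdvd
  have hnp : n ^ (m + 1) = ℓ * (n - 1) + 1 := by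
    have h1 : 1 ≤ n ^ (m + 1) := Nat.one_le_pow _ _ (by omega)
    omega
  have hpf : (p : ZMod ℓ) ^ f = 1 := by
    have : ((p ^ f : ℕ) : ZMod ℓ) = ((ℓ * (n - 1) + 1 : ℕ) : ZMod ℓ) := by
      rw [hf, pow_mul, ← hn, hnp]
    push_cast at this
    simpa [ZMod.natCast_self] using this
  have hpu : IsUnit ((p : ZMod ℓ)) := by
    apply IsUnit.of_mul_eq_one ((p : ZMod ℓ) ^ (f - 1))
    rw [← pow_succ']
    rw [show f - 1 + 1 = f by omega, hpf]
  have hud : ∀ a : ℕ, IsUnit ((p : ZMod ℓ) ^ a) := fun a => hpu.pow a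
  have hkfk : k ≤ f * k := Nat.le_mul_of_pos_left k (by omega)
  constructor
  · intro H
    constructor
    · intro i hi
      have hlt : i.1 < f * k := lt_of_lt_of_le i.2 hkfk
      have := H ⟨i.1, hlt⟩
      rw [hc, hc] at this
      simp only at this
      have e0 : (i.1 + 1) % (f * k) = i.1 + 1 := Nat.mod_eq_of_lt (by omega)
      have e1 : i.1 / k = 0 := Nat.div_eq_of_lt (by omega)
      have e2 : (i.1 + 1) / k = 0 := Nat.div_eq_of_lt (by omega)
      have e3 : i.1 % k = i.1 := Nat.mod_eq_of_lt (by omega)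
      have e4 : (i.1 + 1) % k = i.1 + 1 := Nat.mod_eq_of_lt (by omega)
      simp only [e0, e1, e2, e3, e4, Nat.zero_mul, pow_zero, one_mul, Fin.eta] at this
      exact this
    · have hlt : k - 1 < f * k := by omega
      have := H ⟨k - 1, hlt⟩
      rw [hc, hc] at this
      simp only at this
      have hkfk2 : k < f * k := by nlinarith
      have e0 : (k - 1 + 1) % (f * k) = k := by
        rw [show k - 1 + 1 = k by omega]; exact Nat.mod_eq_of_lt hkfk2
      have e1 : (k - 1) / k = 0 := Nat.div_eq_of_lt (by omega)
      have e2 : (k - 1) % k = k - 1 := Nat.mod_eq_of_lt (by omega)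
      simp only [e0, e1, e2, Nat.div_self (by omega : 0 < k), Nat.mod_self,
        Nat.zero_mul, pow_zero, one_mul, Nat.one_mul] at this
      exact this
  · rintro ⟨H1, H2⟩ t
    obtain ⟨h, hh⟩ : ∃ h, h = t.1 / k := ⟨_, rfl⟩
    obtain ⟨i, hi⟩ : ∃ i, i = t.1 % k := ⟨_, rfl⟩
    have hik : i < k := hi ▸ Nat.mod_lt _ hk
    have hhf : h < f := hh ▸ (Nat.div_lt_iff_lt_mul (by omega : 0 < k)).mpr t.2
    have ht : k * h + i = t.1 := by rw [hh, hi]; exact Nat.div_add_mod t.1 k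
    rw [hc, hc]
    simp only [← hh, ← hi]
    rcases lt_or_ge (i + 1) k with hcase | hcase
    · -- within a block
      have e2 : (t.1 + 1) % k = i + 1 := by
        rw [show t.1 + 1 = k * h + (i + 1) by omega, Nat.mul_add_mod,
          Nat.mod_eq_of_lt hcase]
      have h1 : t.1 + 1 < f * k := by
        rcases Nat.lt_or_ge (t.1 + 1) (f * k) with h' | h'
        · exact h'
        · exfalso
          have hle : t.1 + 1 = f * k := by have := t.2; omega
          rw [hle, Nat.mul_mod_left] at e2
          omega
      have e0 : (t.1 + 1) % (f * k) = t.1 + 1 := Nat.mod_eq_of_lt h1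
      have e1 : (t.1 + 1) / k = h := by
        rw [show t.1 + 1 = k * h + (i + 1) by omega, Nat.mul_add_div (by omega),
          Nat.div_eq_of_lt hcase]
        omega
      simp only [e0, e1, e2, ← mul_sub]
      exact (hud _).mul (H1 ⟨i, hik⟩ hcase)
    · -- block boundary: i = k - 1
      have hie : i = k - 1 := by omega
      have hdk : d ⟨i, hik⟩ = d ⟨k - 1, by omega⟩ := by congr 1; exact Fin.ext hie
      have heq : k * (h + 1) = k * h + k := by ring
      have ht1 : t.1 + 1 = k * (h + 1) := by omega
      rcases lt_or_ge (h + 1) f with hcase2 | hcase2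
      · have h1 : t.1 + 1 < f * k := by
          have h2 : k * (h + 1) < k * f := (Nat.mul_lt_mul_left (by omega : 0 < k)).mpr hcase2
          have h3 : k * f = f * k := Nat.mul_comm k f
          omega
        have e0 : (t.1 + 1) % (f * k) = t.1 + 1 := Nat.mod_eq_of_lt h1
        have e1 : (t.1 + 1) / k = h + 1 := by
          rw [ht1, Nat.mul_div_cancel_left _ (by omega : 0 < k)]
        have e2 : (t.1 + 1) % k = 0 := by rw [ht1, Nat.mul_mod_right]
        simp only [e0, e1, e2, hdk]
        rw [aux_block]
        exact (hud _).mul H2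
      · -- wrap around: h = f - 1
        have hhe : h + 1 = f := by omega
        have h1 : t.1 + 1 = f * k := by
          rw [ht1, hhe, Nat.mul_comm]
        have e0 : (t.1 + 1) % (f * k) = 0 := by rw [h1, Nat.mod_self]
        simp only [e0, Nat.zero_div, Nat.zero_mod, Nat.zero_mul, pow_zero, one_mul, hdk]
        rw [aux_wrap (p : ZMod ℓ) h j f hpf hhe]
        exact (hud _).mul H2
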